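/- (Degeneracy of the one-dimensional tropical non-strict signature) Let z = (z_1, z_2, …) be a sequence of real numbers, 0 ≤ s < t integers, and a_1, …, a_n positive integers. Then min_{s < j_1 ≤ j_2 ≤ ⋯ ≤ j_n ≤ t} (a_1 z_{j_1} + ⋯ + a_n z_{j_n}) = min_{s < j ≤ t} (a_1 + ⋯ + a_n) z_j; that is, the non-strict tropical iterated-sum coefficient of the word [1^{a_1}]⋯[1^{a_n}] equals that of the single letter [1^{a_1+⋯+a_n}]. -/

import Mathlib

/-- The tropical (min-plus) **non-strict** iterated-sums signature coefficient
`⟨ISS^(idem)_{s,t}(z), w⟩ = min_{s < j_1 ≤ ⋯ ≤ j_k ≤ t} (w_1 z_{j_1} + ⋯ + w_k z_{j_k})`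
of a real sequence `z`, for a word `w` with positive integer letters; it takes values
in `ℝ ∪ {+∞}`, is `0` on the empty word, and `+∞` when the index set is empty. -/
noncomputable def tropISS (z : ℕ → ℝ) : ℕ → ℕ → List ℕ → WithTop ℝ
  | _, _, [] => 0
  | s, t, a :: w =>
      (Finset.Ioc s t).inf fun j => (((a : ℝ) * z j : ℝ) : WithTop ℝ) + tropISS z (j - 1) t w

/-- **Degeneracy of the one-dimensional tropical non-strict signature.** For a real
sequence `z`, integers `0 ≤ s < t`, and positive integer letters `a_1, …, a_n` forming
the word `w = [1^{a_1}]⋯[1^{a_n}]`: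
`min_{s < j_1 ≤ ⋯ ≤ j_n ≤ t} (a_1 z_{j_1} + ⋯ + a_n z_{j_n})
  = min_{s < j ≤ t} (a_1 + ⋯ + a_n) z_j`;
i.e. the non-strict coefficient of `w` equals that of the single letter
`[1^{a_1 + ⋯ + a_n}]`. -/
theorem trop_issi_degenerate (z : ℕ → ℝ) (s t : ℕ) (hst : s < t)
    (w : List ℕ) (hw : ∀ a ∈ w, 0 < a) :
    tropISS z s t w =
      (Finset.Ioc s t).inf fun j => (((w.sum : ℝ) * z j : ℝ) : WithTop ℝ) := by
  induction w generalizing s with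
  | nil =>
    have hne : (Finset.Ioc s t).Nonempty := ⟨t, Finset.mem_Ioc.mpr ⟨hst, le_rfl⟩⟩
    simp [tropISS, Finset.inf_const hne]
  | cons a w ih =>
    have ha : 0 < a := hw a List.mem_cons_self
    have hw' : ∀ b ∈ w, 0 < b := fun b hb => hw b (List.mem_cons_of_mem a hb)
    have hW : (0:ℝ) ≤ (w.sum : ℝ) := Nat.cast_nonneg _
    have ha' : (0:ℝ) ≤ (a : ℝ) := Nat.cast_nonneg _
    rw [tropISS]
    apply le_antisymm
    · apply Finset.le_inf
      intro j hj
      obtain ⟨hsj, hjt⟩ := Finset.mem_Ioc.mp hj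
      have hjt' : j - 1 < t := by omega
      refine le_trans (Finset.inf_le hj) ?_
      rw [ih (j-1) hjt' hw']
      have hjmem : j ∈ Finset.Ioc (j-1) t := Finset.mem_Ioc.mpr ⟨by omega, hjt⟩
      refine le_trans (add_le_add_right (Finset.inf_le hjmem) _) ?_
      rw [← WithTop.coe_add, WithTop.coe_le_coe]
      have : ((List.sum (a :: w) : ℕ) : ℝ) = (a : ℝ) + (w.sum : ℝ) := by
        push_cast [List.sum_cons]; ring
      exact le_of_eq (by rw [this]; ring)
    · apply Finset.le_inf
      intro j hj
      obtain ⟨hsj, hjt⟩ := Finset.mem_Ioc.mp hj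
      have hjt' : j - 1 < t := by omega
      rw [ih (j-1) hjt' hw']
      have hne : (Finset.Ioc (j-1) t).Nonempty := ⟨t, Finset.mem_Ioc.mpr ⟨hjt', le_rfl⟩⟩
      obtain ⟨k, hk, hkeq⟩ := Finset.exists_mem_eq_inf (Finset.Ioc (j-1) t) hne
        (fun k => (((w.sum : ℝ) * z k : ℝ) : WithTop ℝ))
      rw [hkeq, ← WithTop.coe_add]
      obtain ⟨hk1, hk2⟩ := Finset.mem_Ioc.mp hk
      have hkmem : k ∈ Finset.Ioc s t := Finset.mem_Ioc.mpr ⟨by omega, hk2⟩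
      have hsum : ((List.sum (a :: w) : ℕ) : ℝ) = (a : ℝ) + (w.sum : ℝ) := by
        push_cast [List.sum_cons]; ring
      rcases le_total (z j) (z k) with h | h
      · refine le_trans (Finset.inf_le hj) ?_
        rw [WithTop.coe_le_coe, hsum]
        nlinarith
      · refine le_trans (Finset.inf_le hkmem) ?_
        rw [WithTop.coe_le_coe, hsum]
        nlinarith
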